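/- Let G be a group. The following are equivalent: (A) G = S(G); (B) every subgroup of finite index of G is exponential in G; (C) every finite quotient of G is nilpotent; (D) every subgroup of finite index of G is subnormal in G. -/

import Mathlib

open Subgroup Pointwise

section Aux
variable {G : Type*} [Group G]

lemma step_pow {H K : Subgroup G} (hHK : H ≤ K)
    (hN : (H.subgroupOf K).Normal) (hK : ∀ x : G, x ^ K.index ∈ K) (x : G) :
    x ^ H.index ∈ H := by
  have h1 : x ^ K.index ∈ K := hK x
  have h2 := @Subgroup.pow_index_mem K _ (H.subgroupOf K) hN ⟨_, h1⟩
  rw [mem_subgroupOf] at h2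
  have h3 : (x ^ K.index) ^ (H.subgroupOf K).index ∈ H := by
    simpa using h2
  rw [← pow_mul, mul_comm] at h3
  have h4 : H.relIndex K * K.index = H.index := relIndex_mul_index hHK
  rwa [show (H.subgroupOf K).index = H.relIndex K from rfl, h4] at h3

lemma chain_pow : ∀ (n : ℕ) (c : Fin (n + 1) → Subgroup G),
    c (Fin.last n) = ⊤ →
    (∀ i : Fin n, c i.castSucc ≤ c i.succ ∧ ((c i.castSucc).subgroupOf (c i.succ)).Normal) →
    ∀ x : G, x ^ (c 0).index ∈ c 0 := by
  intro n
  induction n with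
  | zero =>
    intro c htop _ x
    have : c 0 = ⊤ := htop
    rw [this]; exact mem_top _
  | succ n ih =>
    intro c htop hstep x
    have h1 : ∀ x : G, x ^ (c 1).index ∈ c 1 := by
      have htop' : (fun i : Fin (n+1) => c i.succ) (Fin.last n) = ⊤ := by
        show c (Fin.last n).succ = ⊤
        rw [Fin.succ_last]; exact htop
      have hstep' : ∀ i : Fin n, (fun j : Fin (n+1) => c j.succ) i.castSucc ≤
          (fun j : Fin (n+1) => c j.succ) i.succ ∧
          (((fun j : Fin (n+1) => c j.succ) i.castSucc).subgroupOf
            ((fun j : Fin (n+1) => c j.succ) i.succ)).Normal := by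
        intro i
        simp only [Fin.succ_castSucc]
        exact hstep i.succ
      have := ih (fun i => c i.succ) htop' hstep'
      simpa using this
    have h0 := hstep 0
    rw [Fin.castSucc_zero, Fin.succ_zero_eq_one] at h0
    exact step_pow h0.1 h0.2 h1 x

/-- conjugation by an element of `Z (i+1)` preserves `A ⊔ Z i`. -/
lemma conj_mem_sup_ucs {Q : Type*} [Group Q] (A : Subgroup Q) (i : ℕ)
    {z : Q} (hz : z ∈ Subgroup.upperCentralSeries Q (i + 1)) {x : Q}
    (hx : x ∈ A ⊔ Subgroup.upperCentralSeries Q i) :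
    z * x * z⁻¹ ∈ A ⊔ Subgroup.upperCentralSeries Q i := by
  have hx' : x ∈ ((A : Set Q) * (Subgroup.upperCentralSeries Q i : Set Q)) := by
    rwa [← Subgroup.mul_normal A (Subgroup.upperCentralSeries Q i)]
  obtain ⟨a, ha, w, hw, rfl⟩ := Set.mem_mul.mp hx'
  have hcomm : z * a * z⁻¹ * a⁻¹ ∈ Subgroup.upperCentralSeries Q i :=
    (Subgroup.mem_upperCentralSeries_succ_iff).mp hz a
  have hw' : z * w * z⁻¹ ∈ Subgroup.upperCentralSeries Q i :=
    (inferInstance : (Subgroup.upperCentralSeries Q i).Normal).conj_mem w hw z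
  have heq : z * (a * w) * z⁻¹ = ((z * a * z⁻¹ * a⁻¹) * a) * (z * w * z⁻¹) := by
    group
  rw [heq]
  exact mul_mem (mul_mem (mem_sup_right hcomm) (mem_sup_left ha)) (mem_sup_right hw')

lemma conj_mem_sup_ucs' {Q : Type*} [Group Q] (A : Subgroup Q) (i : ℕ)
    {g x : Q} (hg : g ∈ A ⊔ Subgroup.upperCentralSeries Q (i + 1))
    (hx : x ∈ A ⊔ Subgroup.upperCentralSeries Q i) :
    g * x * g⁻¹ ∈ A ⊔ Subgroup.upperCentralSeries Q i := by
  have hg' : g ∈ ((A : Set Q) * (Subgroup.upperCentralSeries Q (i + 1) : Set Q)) := by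
    rwa [← Subgroup.mul_normal A (Subgroup.upperCentralSeries Q (i + 1))]
  obtain ⟨a, ha, z, hz, rfl⟩ := Set.mem_mul.mp hg'
  have h1 : z * x * z⁻¹ ∈ A ⊔ Subgroup.upperCentralSeries Q i := conj_mem_sup_ucs A i hz hx
  have heq : (a * z) * x * (a * z)⁻¹ = a * (z * x * z⁻¹) * a⁻¹ := by group
  rw [heq]
  have haA : a ∈ A ⊔ Subgroup.upperCentralSeries Q i := mem_sup_left ha
  exact mul_mem (mul_mem haA h1) (inv_mem haA)

lemma nilpotent_of_pow_index_mem {Q : Type*} [Group Q] [Finite Q]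
    (hexp : ∀ (H : Subgroup Q) (x : Q), x ^ H.index ∈ H) : Group.IsNilpotent Q := by
  refine ((isNilpotent_of_finite_tfae (G := Q)).out 0 3).mpr ?_
  intro p hp P
  rw [← normalizer_eq_top_iff]
  set Np := normalizer ((P : Subgroup Q) : Set Q) with hNp
  have h1 : (P : Subgroup Q) ≤ Np := le_normalizer
  have hcop : (Nat.card P).Coprime Np.index :=
    (P.card_coprime_index).coprime_dvd_right (index_dvd_of_le h1)
  have key : ∀ R : Sylow p Q, (R : Subgroup Q) ≤ Np := by
    intro R x hx
    have hcard : Nat.card R = Nat.card P := by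
      rw [Sylow.card_eq_multiplicity, Sylow.card_eq_multiplicity]
    have hcop' : (Nat.card R).Coprime Np.index := by rwa [hcard]
    set z := (powCoprime hcop').symm (⟨x, hx⟩ : R) with hzdef
    have hz : (z : R) ^ Np.index = (⟨x, hx⟩ : R) := (powCoprime hcop').apply_symm_apply _
    have hz' : (z : Q) ^ Np.index = x := by
      have h5 : ((z ^ Np.index : R) : Q) = ((⟨x, hx⟩ : R) : Q) := congrArg _ hz
      push_cast at h5
      exact h5
    rw [← hz']
    exact hexp Np (z : Q)
  rw [eq_top_iff]
  intro g _
  have h2 : ((g • P : Sylow p Q) : Subgroup Q) ≤ Np := key _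
  obtain ⟨h, hh⟩ := MulAction.exists_smul_eq Np ((g • P).subtype h2) (P.subtype h1)
  simp_rw [Sylow.smul_subtype, Subgroup.smul_def, smul_smul] at hh
  have hmem : (h : Q) * g ∈ Np :=
    Sylow.smul_eq_iff_mem_normalizer.mp (Sylow.subtype_injective hh)
  have : g = (h : Q)⁻¹ * ((h : Q) * g) := by group
  rw [this]
  exact Np.mul_mem (Np.inv_mem h.2) hmem

end Aux

/-- `S(G)` is the set of `x ∈ G` such that `x ^ |G:H| ∈ H` for every finite-index
subgroup `H ≤ G`. -/
def Sset (G : Type*) [Group G] : Set G :=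
  {x : G | ∀ H : Subgroup G, H.index ≠ 0 → x ^ H.index ∈ H}

/-- A subgroup `H ≤ G` is exponential if it has finite index and `x ^ |G:H| ∈ H`
for every `x ∈ G`. -/
def IsExponential {G : Type*} [Group G] (H : Subgroup G) : Prop :=
  H.index ≠ 0 ∧ ∀ x : G, x ^ H.index ∈ H

/-- `H` is subnormal in `G` if there is a finite chain
`H = c 0 ⊴ c 1 ⊴ ... ⊴ c n = G` with each term normal in the next. -/
def IsSubnormal {G : Type*} [Group G] (H : Subgroup G) : Prop :=
  ∃ (n : ℕ) (c : Fin (n + 1) → Subgroup G),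
    c 0 = H ∧ c (Fin.last n) = ⊤ ∧
    ∀ i : Fin n, c i.castSucc ≤ c i.succ ∧ ((c i.castSucc).subgroupOf (c i.succ)).Normal

section Impl
variable {G : Type*} [Group G]

lemma quotient_nilpotent
    (hA : ∀ (x : G) (H : Subgroup G), H.index ≠ 0 → x ^ H.index ∈ H)
    (N : Subgroup G) [N.Normal] (hN : N.index ≠ 0) : Group.IsNilpotent (G ⧸ N) := by
  haveI : Finite (G ⧸ N) := by
    refine Nat.finite_of_card_ne_zero ?_
    rwa [← Subgroup.index_eq_card]
  apply nilpotent_of_pow_index_mem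
  intro H x
  rcases eq_or_ne H.index 0 with h0 | h0
  · rw [h0, pow_zero]; exact H.one_mem
  · obtain ⟨g, rfl⟩ := QuotientGroup.mk'_surjective N x
    set K := H.comap (QuotientGroup.mk' N) with hK
    have hKi : K.index = H.index :=
      H.index_comap_of_surjective (QuotientGroup.mk'_surjective N)
    have h6 := hA g K (by rw [hKi]; exact h0)
    rw [hKi, hK, mem_comap, map_pow] at h6
    exact h6

lemma subnormal_of_quot
    (hC : ∀ (N : Subgroup G) [N.Normal], N.index ≠ 0 → Group.IsNilpotent (G ⧸ N))
    (H : Subgroup G) (hH : H.index ≠ 0) : _root_.IsSubnormal H := by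
  haveI : H.FiniteIndex := ⟨hH⟩
  haveI hnil : Group.IsNilpotent (G ⧸ H.normalCore) :=
    hC H.normalCore Subgroup.FiniteIndex.index_ne_zero
  obtain ⟨n, hn⟩ := Group.IsNilpotent.nilpotent (G ⧸ H.normalCore)
  set f := QuotientGroup.mk' H.normalCore with hf
  set A := H.map f with hA
  refine ⟨n, fun i => comap f (A ⊔ Subgroup.upperCentralSeries (G ⧸ H.normalCore) (i : ℕ)), ?_, ?_, ?_⟩
  · show comap f (A ⊔ Subgroup.upperCentralSeries _ ((0 : Fin (n + 1)) : ℕ)) = H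
    rw [show ((0 : Fin (n + 1)) : ℕ) = 0 from rfl, Subgroup.upperCentralSeries_zero, sup_bot_eq, hA,
      comap_map_eq, QuotientGroup.ker_mk', sup_of_le_left H.normalCore_le]
  · show comap f (A ⊔ Subgroup.upperCentralSeries _ ((Fin.last n : Fin (n + 1)) : ℕ)) = ⊤
    rw [Fin.val_last, hn, sup_top_eq, comap_top]
  · intro i
    have hle : A ⊔ Subgroup.upperCentralSeries (G ⧸ H.normalCore) (i.castSucc : ℕ) ≤
        A ⊔ Subgroup.upperCentralSeries (G ⧸ H.normalCore) (i.succ : ℕ) := by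
      apply sup_le_sup_left
      apply Subgroup.upperCentralSeries_mono
      rw [Fin.coe_castSucc, Fin.val_succ]; omega
    refine ⟨comap_mono hle, ?_⟩
    constructor
    intro x hx g
    rw [mem_subgroupOf] at hx ⊢
    rw [mem_comap] at hx ⊢
    have hg : f (g : G) ∈ A ⊔ Subgroup.upperCentralSeries (G ⧸ H.normalCore) ((i.castSucc : ℕ) + 1) := by
      have h8 := g.2
      rw [mem_comap] at h8
      rwa [show ((i.succ : ℕ)) = (i.castSucc : ℕ) + 1 by rw [Fin.coe_castSucc, Fin.val_succ]] at h8
    have h7 := conj_mem_sup_ucs' A _ hg hx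
    simpa [map_mul, map_inv] using h7

end Impl

/-- The following are equivalent for a group `G`:
(A) `G = S(G)`;
(B) every finite-index subgroup of `G` is exponential;
(C) every finite quotient of `G` is nilpotent;
(D) every finite-index subgroup of `G` is subnormal. -/
theorem sSet_eq_univ_tfae {G : Type*} [Group G] :
    ((Sset G = Set.univ) ↔ (∀ H : Subgroup G, H.index ≠ 0 → IsExponential H)) ∧
    ((Sset G = Set.univ) ↔
      (∀ (N : Subgroup G) [N.Normal], N.index ≠ 0 → Group.IsNilpotent (G ⧸ N))) ∧
    ((Sset G = Set.univ) ↔ (∀ H : Subgroup G, H.index ≠ 0 → _root_.IsSubnormal H)) := by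
  have hAB : (Sset G = Set.univ) ↔ (∀ H : Subgroup G, H.index ≠ 0 → IsExponential H) := by
    constructor
    · intro h H hH
      exact ⟨hH, fun x => (Set.eq_univ_iff_forall.mp h x) H hH⟩
    · intro h
      rw [Set.eq_univ_iff_forall]
      intro x H hH
      exact (h H hH).2 x
  have hAC : (Sset G = Set.univ) →
      ∀ (N : Subgroup G) [N.Normal], N.index ≠ 0 → Group.IsNilpotent (G ⧸ N) := by
    intro h N _ hN
    exact quotient_nilpotent (fun x H hH => (Set.eq_univ_iff_forall.mp h x) H hH) N hN
  have hCD : (∀ (N : Subgroup G) [N.Normal], N.index ≠ 0 → Group.IsNilpotent (G ⧸ N)) →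
      ∀ H : Subgroup G, H.index ≠ 0 → _root_.IsSubnormal H := fun hC H hH => subnormal_of_quot hC H hH
  have hDA : (∀ H : Subgroup G, H.index ≠ 0 → _root_.IsSubnormal H) → Sset G = Set.univ := by
    intro hD
    rw [Set.eq_univ_iff_forall]
    intro x H hH
    obtain ⟨n, c, hc0, hct, hstep⟩ := hD H hH
    have h9 := chain_pow n c hct hstep x
    rwa [hc0] at h9
  exact ⟨hAB, ⟨fun h => hAC h, fun h => hDA (hCD h)⟩, ⟨fun h => hCD (hAC h), hDA⟩⟩
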